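/- Let α ∈ ℂ with σ = Re α, and let f : (0,∞) → ℂ be measurable with x ↦ |f(x)| x^{σ−1} integrable on (0,∞). Define the multiplicative convolution powers f^{∗1} = f and f^{∗(n+1)} = f ∗ f^{∗n}. Then for almost every x > 0 the series Σ_{n≥1} (−1)^{n−1} f^{∗n}(x)/n! converges absolutely, its sum S(x) satisfies x ↦ |S(x)| x^{σ−1} integrable, and its Mellin transform at α equals 1 − exp(−f̃(α)): ∫₀^∞ S(x) x^{α−1} dx = 1 − e^{−f̃(α)}, where f̃(α) = ∫₀^∞ f(x) x^{α−1} dx. (Equivalently, the Mellin transform sends the convolution exponential of −f to the ordinary exponential of −f̃(α).) -/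

import Mathlib

open MeasureTheory Set

/-- Multiplicative convolution on `(0,∞)`: `(f ∗ g)(x) = ∫₀^∞ f(y) g(x/y) y⁻¹ dy`. -/
noncomputable def mulConv (f g : ℝ → ℂ) (x : ℝ) : ℂ :=
  ∫ y in Set.Ioi (0 : ℝ), f y * g (x / y) * (y : ℂ)⁻¹

/-- Multiplicative convolution powers: `mulConvPow f 0 = f = f^{∗1}` and
`mulConvPow f (n+1) = f ∗ mulConvPow f n = f^{∗(n+2)}`; so `mulConvPow f n = f^{∗(n+1)}`. -/
noncomputable def mulConvPow (f : ℝ → ℂ) : ℕ → ℝ → ℂ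
  | 0 => f
  | n + 1 => mulConv f (mulConvPow f n)


lemma measurable_ofReal_cpow (c : ℂ) : Measurable fun x : ℝ => (x : ℂ) ^ c := by
  have h : (fun x : ℝ => (x : ℂ) ^ c) = fun x : ℝ =>
      if (x : ℂ) = 0 then (if c = 0 then 1 else 0) else Complex.exp (Complex.log x * c) :=
    funext fun x => Complex.cpow_def _ _
  rw [h]
  refine Measurable.ite ?_ measurable_const
    (Complex.measurable_exp.comp ((Complex.measurable_log.comp Complex.measurable_ofReal).mul_const c))
  have : {x : ℝ | (x : ℂ) = 0} = {(0 : ℝ)} := by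
    ext x; simp [Complex.ofReal_eq_zero]
  rw [show {a : ℝ | (a : ℂ) = 0} = {(0 : ℝ)} from this]
  exact measurableSet_singleton 0

lemma norm_ofReal_cpow {x : ℝ} (hx : 0 < x) (c : ℂ) : ‖(x : ℂ) ^ c‖ = x ^ c.re := by
  rw [Complex.norm_cpow_eq_rpow_re_of_pos hx]

lemma mellin_conv_step (α : ℂ) (f g : ℝ → ℂ) (hfm : Measurable f) (hgm : Measurable g)
    (hF : Integrable (fun x => f x * (x : ℂ) ^ (α - 1)) (volume.restrict (Ioi 0)))
    (hG : Integrable (fun x => g x * (x : ℂ) ^ (α - 1)) (volume.restrict (Ioi 0))) :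
    Integrable (fun x => mulConv f g x * (x : ℂ) ^ (α - 1)) (volume.restrict (Ioi 0)) ∧
    (∫ x in Ioi (0:ℝ), mulConv f g x * (x : ℂ) ^ (α - 1)) =
      (∫ x in Ioi (0:ℝ), f x * (x : ℂ) ^ (α - 1)) * ∫ x in Ioi (0:ℝ), g x * (x : ℂ) ^ (α - 1) ∧
    (∫ x in Ioi (0:ℝ), ‖mulConv f g x * (x : ℂ) ^ (α - 1)‖) ≤
      (∫ x in Ioi (0:ℝ), ‖f x * (x : ℂ) ^ (α - 1)‖) * ∫ x in Ioi (0:ℝ), ‖g x * (x : ℂ) ^ (α - 1)‖ := by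
  set μ := volume.restrict (Ioi (0:ℝ)) with hμ
  set G : ℝ → ℂ := fun z => g z * (z : ℂ) ^ (α - 1) with hGdef
  set Φ : ℝ × ℝ → ℂ := fun p =>
    f p.2 * g (p.1 / p.2) * (p.2 : ℂ)⁻¹ * (p.1 : ℂ) ^ (α - 1) with hΦdef
  have hΦm : Measurable Φ := by
    exact (((hfm.comp measurable_snd).mul
      (hgm.comp (measurable_fst.div measurable_snd))).mul
      ((Complex.measurable_ofReal.comp measurable_snd).inv)).mul
      ((measurable_ofReal_cpow (α - 1)).comp measurable_fst)
  -- slice identity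
  have hslice : ∀ y : ℝ, 0 < y → ∀ x ∈ Ioi (0:ℝ),
      Φ (x, y) = (f y * (y : ℂ) ^ (α - 1) * (y : ℂ)⁻¹) * G (y⁻¹ * x) := by
    intro y hy x hx
    have hx' : (0:ℝ) < x := hx
    have hz : (0:ℝ) < y⁻¹ * x := by positivity
    have hxeq : x = y * (y⁻¹ * x) := by field_simp
    have hcp : (x : ℂ) ^ (α - 1) = (y : ℂ) ^ (α - 1) * ((y⁻¹ * x : ℝ) : ℂ) ^ (α - 1) := by
      conv_lhs => rw [hxeq]
      rw [Complex.ofReal_mul, Complex.mul_cpow_ofReal_nonneg hy.le hz.le]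
    simp only [hΦdef, hGdef]
    rw [div_eq_inv_mul, hcp]
    ring
  have hyint : ∀ y : ℝ, 0 < y → Integrable (fun x => Φ (x, y)) μ := by
    intro y hy
    have : IntegrableOn (fun x => (f y * (y : ℂ) ^ (α - 1) * (y : ℂ)⁻¹) * G (y⁻¹ * x)) (Ioi 0) := by
      have h0 : IntegrableOn (fun x => G (y⁻¹ * x)) (Ioi 0) := by
        have := (integrableOn_Ioi_comp_mul_left_iff G 0 (inv_pos.2 hy)).2
        simpa using this (by simpa using (show IntegrableOn G (Ioi 0) volume from hG))
      exact h0.const_mul _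
    exact (integrableOn_congr_fun (fun x hx => hslice y hy x hx) measurableSet_Ioi).2 this
  have hval : ∀ y : ℝ, 0 < y →
      (∫ x, Φ (x, y) ∂μ) = (f y * (y : ℂ) ^ (α - 1)) * ∫ z, G z ∂μ := by
    intro y hy
    have h1 : (∫ x, Φ (x, y) ∂μ)
        = ∫ x in Ioi (0:ℝ), (f y * (y : ℂ) ^ (α - 1) * (y : ℂ)⁻¹) * G (y⁻¹ * x) :=
      setIntegral_congr_fun measurableSet_Ioi (fun x hx => hslice y hy x hx)
    rw [h1, integral_const_mul]
    have h2 : (∫ x in Ioi (0:ℝ), G (y⁻¹ * x)) = y • ∫ z in Ioi (0:ℝ), G z := by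
      have := integral_comp_mul_left_Ioi G 0 (inv_pos.2 hy)
      simpa [inv_inv] using this
    rw [h2, Complex.real_smul]
    have hy0 : (y : ℂ) ≠ 0 := Complex.ofReal_ne_zero.2 hy.ne'
    field_simp
    ring
  have hnval : ∀ y : ℝ, 0 < y →
      (∫ x, ‖Φ (x, y)‖ ∂μ) = (‖f y‖ * y ^ (α.re - 1)) * ∫ z, ‖G z‖ ∂μ := by
    intro y hy
    have h1 : (∫ x, ‖Φ (x, y)‖ ∂μ)
        = ∫ x in Ioi (0:ℝ), ‖f y * (y : ℂ) ^ (α - 1) * (y : ℂ)⁻¹‖ * ‖G (y⁻¹ * x)‖ :=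
      setIntegral_congr_fun measurableSet_Ioi (fun x hx => by rw [hslice y hy x hx, norm_mul])
    rw [h1, integral_const_mul]
    have h2 : (∫ x in Ioi (0:ℝ), ‖G (y⁻¹ * x)‖) = y • ∫ z in Ioi (0:ℝ), ‖G z‖ := by
      have := integral_comp_mul_left_Ioi (fun z => ‖G z‖) 0 (inv_pos.2 hy)
      simpa [inv_inv] using this
    rw [h2]
    have hc : ‖f y * (y : ℂ) ^ (α - 1) * (y : ℂ)⁻¹‖ = ‖f y‖ * y ^ (α.re - 1) * y⁻¹ := by
      rw [norm_mul, norm_mul, norm_inv, Complex.norm_real, Real.norm_of_nonneg hy.le,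
        norm_ofReal_cpow hy, Complex.sub_re, Complex.one_re]
    rw [hc, smul_eq_mul]
    field_simp
    ring
  have hΦint : Integrable Φ (μ.prod μ) := by
    rw [integrable_prod_iff' hΦm.aestronglyMeasurable]
    constructor
    · filter_upwards [ae_restrict_mem measurableSet_Ioi] with y hy
      exact hyint y hy
    · have : Integrable (fun y => ‖f y * (y : ℂ) ^ (α - 1)‖ * ∫ z, ‖G z‖ ∂μ) μ :=
        hF.norm.mul_const _
      refine this.congr ?_
      filter_upwards [ae_restrict_mem measurableSet_Ioi] with y hy
      rw [hnval y hy, norm_mul, norm_ofReal_cpow hy, Complex.sub_re, Complex.one_re]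
  have heqH : (fun x => mulConv f g x * (x : ℂ) ^ (α - 1)) = fun x => ∫ y, Φ (x, y) ∂μ := by
    funext x
    rw [show mulConv f g x = ∫ y, f y * g (x / y) * (y : ℂ)⁻¹ ∂μ from rfl,
      ← integral_mul_const]
  have hint1 : Integrable (fun x => mulConv f g x * (x : ℂ) ^ (α - 1)) μ := by
    rw [heqH]; exact hΦint.integral_prod_left
  refine ⟨hint1, ?_, ?_⟩
  · have hswap := integral_integral_swap (f := fun x y => Φ (x, y)) (μ := μ) (ν := μ)
      (by exact hΦint)
    calc (∫ x, mulConv f g x * (x : ℂ) ^ (α - 1) ∂μ) = ∫ x, ∫ y, Φ (x, y) ∂μ ∂μ := by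
          rw [heqH]
      _ = ∫ y, ∫ x, Φ (x, y) ∂μ ∂μ := hswap
      _ = ∫ y, (f y * (y : ℂ) ^ (α - 1)) * ∫ z, G z ∂μ ∂μ := by
          refine setIntegral_congr_fun measurableSet_Ioi (fun y hy => hval y hy)
      _ = (∫ y, f y * (y : ℂ) ^ (α - 1) ∂μ) * ∫ z, G z ∂μ := integral_mul_const _ _
  · have hnorm_int : Integrable (fun x => ∫ y, ‖Φ (x, y)‖ ∂μ) μ :=
      hΦint.norm.integral_prod_left
    have hswapn := integral_integral_swap (f := fun x y => ‖Φ (x, y)‖) (μ := μ) (ν := μ)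
      (by exact hΦint.norm)
    calc (∫ x, ‖mulConv f g x * (x : ℂ) ^ (α - 1)‖ ∂μ)
        ≤ ∫ x, ∫ y, ‖Φ (x, y)‖ ∂μ ∂μ := by
          refine integral_mono hint1.norm hnorm_int (fun x => ?_)
          rw [congrFun heqH x]
          exact norm_integral_le_integral_norm _
      _ = ∫ y, ∫ x, ‖Φ (x, y)‖ ∂μ ∂μ := hswapn
      _ = ∫ y, (‖f y‖ * y ^ (α.re - 1)) * ∫ z, ‖G z‖ ∂μ ∂μ :=
          setIntegral_congr_fun measurableSet_Ioi (fun y hy => hnval y hy)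
      _ = (∫ y, ‖f y‖ * y ^ (α.re - 1) ∂μ) * ∫ z, ‖G z‖ ∂μ := integral_mul_const _ _
      _ = (∫ y, ‖f y * (y : ℂ) ^ (α - 1)‖ ∂μ) * ∫ z, ‖G z‖ ∂μ := by
          congr 1
          refine setIntegral_congr_fun measurableSet_Ioi (fun y hy => ?_)
          rw [norm_mul, norm_ofReal_cpow hy, Complex.sub_re, Complex.one_re]

lemma measurable_mulConv (f g : ℝ → ℂ) (hf : Measurable f) (hg : Measurable g) :
    Measurable (mulConv f g) := by
  have hκ : Measurable fun p : ℝ × ℝ => f p.2 * g (p.1 / p.2) * (p.2 : ℂ)⁻¹ :=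
    ((hf.comp measurable_snd).mul (hg.comp (measurable_fst.div measurable_snd))).mul
      ((Complex.measurable_ofReal.comp measurable_snd).inv)
  exact (hκ.stronglyMeasurable.integral_prod_right').measurable

lemma mulConvPow_props (α : ℂ) (f : ℝ → ℂ) (hfm : Measurable f)
    (hF : Integrable (fun x => f x * (x : ℂ) ^ (α - 1)) (volume.restrict (Ioi 0))) (n : ℕ) :
    Measurable (mulConvPow f n) ∧
      Integrable (fun x => mulConvPow f n x * (x : ℂ) ^ (α - 1)) (volume.restrict (Ioi 0)) ∧
      (∫ x in Ioi (0:ℝ), mulConvPow f n x * (x : ℂ) ^ (α - 1)) =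
        (∫ x in Ioi (0:ℝ), f x * (x : ℂ) ^ (α - 1)) ^ (n + 1) ∧
      (∫ x in Ioi (0:ℝ), ‖mulConvPow f n x * (x : ℂ) ^ (α - 1)‖) ≤
        (∫ x in Ioi (0:ℝ), ‖f x * (x : ℂ) ^ (α - 1)‖) ^ (n + 1) := by
  induction n with
  | zero =>
    refine ⟨hfm, hF, ?_, ?_⟩
    · rw [pow_one]; rfl
    · rw [pow_one]; exact le_of_eq rfl
  | succ n ih =>
    obtain ⟨hm, hint, hval, hnorm⟩ := ih
    have step := mellin_conv_step α f (mulConvPow f n) hfm hm hF hint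
    have hA0 : 0 ≤ ∫ x in Ioi (0:ℝ), ‖f x * (x : ℂ) ^ (α - 1)‖ :=
      integral_nonneg fun x => norm_nonneg _
    refine ⟨measurable_mulConv f _ hfm hm, ?_, ?_, ?_⟩
    · exact step.1
    · show (∫ x in Ioi (0:ℝ), mulConv f (mulConvPow f n) x * (x : ℂ) ^ (α - 1)) = _
      rw [step.2.1, hval]; ring
    · show (∫ x in Ioi (0:ℝ), ‖mulConv f (mulConvPow f n) x * (x : ℂ) ^ (α - 1)‖) ≤ _
      calc (∫ x in Ioi (0:ℝ), ‖mulConv f (mulConvPow f n) x * (x : ℂ) ^ (α - 1)‖)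
          ≤ (∫ x in Ioi (0:ℝ), ‖f x * (x : ℂ) ^ (α - 1)‖) *
              ∫ x in Ioi (0:ℝ), ‖mulConvPow f n x * (x : ℂ) ^ (α - 1)‖ := step.2.2
        _ ≤ (∫ x in Ioi (0:ℝ), ‖f x * (x : ℂ) ^ (α - 1)‖) *
              (∫ x in Ioi (0:ℝ), ‖f x * (x : ℂ) ^ (α - 1)‖) ^ (n + 1) :=
            mul_le_mul_of_nonneg_left hnorm hA0
        _ = (∫ x in Ioi (0:ℝ), ‖f x * (x : ℂ) ^ (α - 1)‖) ^ (n + 1 + 1) := by ring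

/-- **Mellin transform of the convolution exponential.**
Let `σ = Re α` and `f : (0,∞) → ℂ` measurable with `x ↦ |f x| x^{σ-1}` integrable.
Then for a.e. `x > 0` the series `Σ_{n≥1} (-1)^{n-1} f^{∗n}(x)/n!` converges absolutely,
its sum `S` satisfies `x ↦ |S x| x^{σ-1}` integrable, and
`∫₀^∞ S(x) x^{α-1} dx = 1 - exp (-f̃(α))`. -/
theorem mellin_convolution_exponential (α : ℂ) (f : ℝ → ℂ) (hfm : Measurable f)
    (hf : IntegrableOn (fun x : ℝ => ‖f x‖ * x ^ (α.re - 1)) (Ioi 0)) :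
    (∀ᵐ x ∂(volume.restrict (Ioi (0 : ℝ))),
      Summable fun n : ℕ =>
        ‖(-1 : ℂ) ^ n * mulConvPow f n x / (Nat.factorial (n + 1) : ℂ)‖) ∧
    IntegrableOn
      (fun x : ℝ =>
        ‖∑' n : ℕ, (-1 : ℂ) ^ n * mulConvPow f n x / (Nat.factorial (n + 1) : ℂ)‖ *
          x ^ (α.re - 1)) (Ioi 0) ∧
    ∫ x in Ioi (0 : ℝ),
        (∑' n : ℕ, (-1 : ℂ) ^ n * mulConvPow f n x / (Nat.factorial (n + 1) : ℂ)) *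
          (x : ℂ) ^ (α - 1) =
      1 - Complex.exp (-∫ x in Ioi (0 : ℝ), f x * (x : ℂ) ^ (α - 1)) := by
  set μ := volume.restrict (Ioi (0:ℝ)) with hμ
  have hF : Integrable (fun x => f x * (x : ℂ) ^ (α - 1)) μ := by
    refine Integrable.mono' hf
      ((hfm.mul (measurable_ofReal_cpow (α - 1))).aestronglyMeasurable) ?_
    filter_upwards [ae_restrict_mem measurableSet_Ioi] with x hx
    rw [norm_mul, norm_ofReal_cpow hx, Complex.sub_re, Complex.one_re]
  set I := ∫ x in Ioi (0:ℝ), f x * (x : ℂ) ^ (α - 1) with hI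
  set A := ∫ x in Ioi (0:ℝ), ‖f x * (x : ℂ) ^ (α - 1)‖ with hA
  have hA0 : 0 ≤ A := integral_nonneg fun x => norm_nonneg _
  have props := mulConvPow_props α f hfm hF
  set c : ℕ → ℂ := fun n => (-1) ^ n / ((n + 1).factorial : ℂ) with hc
  set G : ℕ → ℝ → ℂ := fun n x => c n * (mulConvPow f n x * (x : ℂ) ^ (α - 1)) with hG
  have hGs : ∀ (n : ℕ) (x : ℝ),
      (-1 : ℂ) ^ n * mulConvPow f n x / (Nat.factorial (n + 1) : ℂ) * (x : ℂ) ^ (α - 1)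
        = G n x := by
    intro n x; simp only [hG, hc]; ring
  have hcnorm : ∀ n : ℕ, ‖c n‖ = (((n + 1).factorial : ℝ))⁻¹ := by
    intro n
    simp only [hc]
    rw [norm_div, norm_pow, norm_neg, norm_one, one_pow, Complex.norm_natCast, one_div]
  have hGm : ∀ n, Measurable (G n) := fun n =>
    (((props n).1).mul (measurable_ofReal_cpow (α - 1))).const_mul (c n)
  have hGint : ∀ n, Integrable (G n) μ := fun n => ((props n).2.1).const_mul _
  have hGnorm_val : ∀ n : ℕ, (∫ x, ‖G n x‖ ∂μ) =
      (((n + 1).factorial : ℝ))⁻¹ * ∫ x in Ioi (0:ℝ), ‖mulConvPow f n x * (x : ℂ) ^ (α - 1)‖ := by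
    intro n
    rw [← integral_const_mul]
    refine integral_congr_ae (Filter.Eventually.of_forall fun x => ?_)
    simp only [hG]
    rw [norm_mul, hcnorm n]
  have hGsum : Summable fun n => ∫ x, ‖G n x‖ ∂μ := by
    have hmaj : Summable fun n : ℕ => A ^ (n + 1) / ((n + 1).factorial : ℝ) := by
      have h := (Real.summable_pow_div_factorial A).comp_injective Nat.succ_injective
      exact h
    refine Summable.of_nonneg_of_le
      (fun n => integral_nonneg fun x => norm_nonneg _) (fun n => ?_) hmaj
    rw [hGnorm_val n]
    calc (((n + 1).factorial : ℝ))⁻¹ *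
          ∫ x in Ioi (0:ℝ), ‖mulConvPow f n x * (x : ℂ) ^ (α - 1)‖
        ≤ (((n + 1).factorial : ℝ))⁻¹ * A ^ (n + 1) :=
          mul_le_mul_of_nonneg_left (props n).2.2.2 (by positivity)
      _ = A ^ (n + 1) / ((n + 1).factorial : ℝ) := by ring
  have hmeas : ∀ n, AEMeasurable (fun x => (‖G n x‖₊ : ENNReal)) μ := fun n =>
    (hGint n).aestronglyMeasurable.enorm
  have key : (∑' n : ℕ, ∫⁻ x, ‖G n x‖₊ ∂μ) ≠ ⊤ := by
    have h1 : ∀ n : ℕ, (∫⁻ x, (‖G n x‖₊ : ENNReal) ∂μ) = (‖∫ x, ‖G n x‖ ∂μ‖₊ : ENNReal) := by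
      intro n
      rw [lintegral_coe_eq_integral (fun x => ‖G n x‖₊) ((hGint n).norm)]
      simp only [coe_nnnorm]
      rw [show ((‖∫ x, ‖G n x‖ ∂μ‖₊ : NNReal) : ENNReal) = ENNReal.ofReal ‖∫ x, ‖G n x‖ ∂μ‖ from
          (ofReal_norm _).symm,
        Real.norm_of_nonneg (integral_nonneg fun x : ℝ => norm_nonneg (G n x))]
    rw [funext h1, ← ENNReal.coe_tsum]
    · exact ENNReal.coe_ne_top
    · simp_rw [← NNReal.summable_coe, coe_nnnorm]
      exact hGsum.abs
  have haes : ∀ᵐ x ∂μ, Summable fun n => ‖G n x‖ := by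
    have key' := key
    rw [← lintegral_tsum hmeas] at key'
    filter_upwards [ae_lt_top' (AEMeasurable.ennreal_tsum hmeas) key'] with x hx
    have h2 := ENNReal.tsum_coe_ne_top_iff_summable_coe.1 hx.ne
    simpa [coe_nnnorm] using h2
  have htsum_int : Integrable (fun x => ∑' n, G n x) μ := by
    refine ⟨?_, ?_⟩
    · refine aestronglyMeasurable_of_tendsto_ae (Filter.atTop : Filter ℕ)
        (f := fun N x => ∑ n ∈ Finset.range N, G n x) (fun N =>
          (Finset.measurable_sum _ fun n _ => hGm n).aestronglyMeasurable) ?_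
      filter_upwards [haes] with x hx
      exact hx.of_norm.hasSum.tendsto_sum_nat
    · show (∫⁻ x, ‖∑' n, G n x‖₊ ∂μ) < ⊤
      calc (∫⁻ x, (‖∑' n, G n x‖₊ : ENNReal) ∂μ)
          ≤ ∫⁻ x, ∑' n, (‖G n x‖₊ : ENNReal) ∂μ := by
            refine lintegral_mono_ae ?_
            filter_upwards [haes] with x hx
            calc (‖∑' n, G n x‖₊ : ENNReal) = ENNReal.ofReal ‖∑' n, G n x‖ :=
                  (ofReal_norm _).symm
              _ ≤ ENNReal.ofReal (∑' n, ‖G n x‖) :=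
                  ENNReal.ofReal_le_ofReal (norm_tsum_le_tsum_norm hx)
              _ = ∑' n, ENNReal.ofReal ‖G n x‖ :=
                  ENNReal.ofReal_tsum_of_nonneg (fun n => norm_nonneg _) hx
              _ = ∑' n, (‖G n x‖₊ : ENNReal) :=
                  tsum_congr fun n => ofReal_norm _
        _ = ∑' n, ∫⁻ x, ‖G n x‖₊ ∂μ := lintegral_tsum hmeas
        _ < ⊤ := key.lt_top
  refine ⟨?_, ?_, ?_⟩
  · filter_upwards [haes, ae_restrict_mem measurableSet_Ioi] with x hx hx0
    have hw : (0:ℝ) < x ^ (α.re - 1) := Real.rpow_pos_of_pos hx0 _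
    have h1 : ∀ n : ℕ, ‖(-1 : ℂ) ^ n * mulConvPow f n x / (Nat.factorial (n + 1) : ℂ)‖
        = ‖G n x‖ * (x ^ (α.re - 1))⁻¹ := by
      intro n
      rw [← hGs n x, norm_mul, norm_ofReal_cpow hx0, Complex.sub_re, Complex.one_re]
      field_simp
    exact (hx.mul_right _).congr fun n => (h1 n).symm
  · refine (htsum_int.norm).congr ?_
    filter_upwards [ae_restrict_mem measurableSet_Ioi] with x hx0
    have h2 : ∑' n, G n x =
        (∑' n : ℕ, (-1 : ℂ) ^ n * mulConvPow f n x / (Nat.factorial (n + 1) : ℂ)) *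
          (x : ℂ) ^ (α - 1) := by
      rw [← tsum_mul_right]
      exact tsum_congr fun n => (hGs n x).symm
    rw [h2, norm_mul, norm_ofReal_cpow hx0, Complex.sub_re, Complex.one_re]
  · have hswap : (∫ x, (∑' n, G n x) ∂μ) = ∑' n, ∫ x, G n x ∂μ :=
      (integral_tsum_of_summable_integral_norm hGint hGsum).symm
    have hLHS : (∫ x in Ioi (0:ℝ),
        (∑' n : ℕ, (-1 : ℂ) ^ n * mulConvPow f n x / (Nat.factorial (n + 1) : ℂ)) *
          (x : ℂ) ^ (α - 1)) = ∫ x, (∑' n, G n x) ∂μ := by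
      refine integral_congr_ae (Filter.Eventually.of_forall fun x => ?_)
      show (∑' n : ℕ, (-1 : ℂ) ^ n * mulConvPow f n x / (Nat.factorial (n + 1) : ℂ)) *
          (x : ℂ) ^ (α - 1) = ∑' n, G n x
      rw [← tsum_mul_right]
      exact tsum_congr fun n => hGs n x
    have hGn_val : ∀ n : ℕ, (∫ x, G n x ∂μ) = c n * I ^ (n + 1) := by
      intro n
      simp only [hG]
      rw [integral_const_mul, (props n).2.2.1]
    have hexp : Complex.exp (-I) = ∑' n : ℕ, (-I) ^ n / (n.factorial : ℂ) := by
      rw [Complex.exp_eq_exp_ℂ, NormedSpace.exp_eq_tsum_div]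
    have hsummable : Summable fun n : ℕ => (-I) ^ n / (n.factorial : ℂ) :=
      NormedSpace.expSeries_div_summable (-I)
    have hterm : ∀ n : ℕ, (-I) ^ (n + 1) / (((n + 1).factorial : ℕ) : ℂ) = -(c n * I ^ (n + 1)) := by
      intro n
      rw [neg_pow]
      simp only [hc]
      rw [pow_succ]
      ring
    have hkey : Complex.exp (-I) = 1 - ∑' n, c n * I ^ (n + 1) := by
      rw [hexp, hsummable.tsum_eq_zero_add]
      simp only [pow_zero, Nat.factorial_zero, Nat.cast_one, div_one]
      rw [tsum_congr hterm, tsum_neg]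
      ring
    rw [hLHS, hswap, tsum_congr hGn_val, hkey]
    ring
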